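/- For every integer n ≥ 1: Π_{1 ≤ i < j ≤ n} (i+j+1)/(i+j−1) = Cat_n, where Cat_n = (1/(n+1))·C(2n,n) is the n-th Catalan number. (For n = 1 the empty product equals 1 = Cat₁.) -/

import Mathlib

lemma aux_prod (c : ℕ) : ∀ m : ℕ,
    ∏ i ∈ Finset.Icc 1 m, (((i : ℚ) + c + 2) / ((i : ℚ) + c)) =
      ((m : ℚ) + c + 1) * ((m : ℚ) + c + 2) / (((c : ℚ) + 1) * ((c : ℚ) + 2)) := by
  intro m
  induction m with
  | zero =>
      rw [Finset.Icc_eq_empty (by omega), Finset.prod_empty]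
      have h1 : ((c : ℚ) + 1) ≠ 0 := by positivity
      have h2 : ((c : ℚ) + 2) ≠ 0 := by positivity
      field_simp
      simp
  | succ m ih =>
      rw [Finset.prod_Icc_succ_top (by omega), ih]
      have h1 : ((c : ℚ) + 1) ≠ 0 := by positivity
      have h2 : ((c : ℚ) + 2) ≠ 0 := by positivity
      have h3 : ((m : ℚ) + 1 + c) ≠ 0 := by positivity
      push_cast
      field_simp
      ring

theorem stmt_10 (n : ℕ) (hn : 1 ≤ n) :
    ∏ i ∈ Finset.Icc 1 n, ∏ j ∈ Finset.Ioc i n,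
        (((i : ℚ) + (j : ℚ) + 1) / ((i : ℚ) + (j : ℚ) - 1)) =
    (1 : ℚ) / (n + 1) * ((2 * n).choose n : ℚ) := by
  clear hn
  induction n with
  | zero => simp
  | succ n ih =>
      rw [Finset.prod_Icc_succ_top (by omega)]
      have hempty : Finset.Ioc (n + 1) (n + 1) = ∅ := by simp
      rw [hempty, Finset.prod_empty, mul_one]
      have hsplit : ∀ i ∈ Finset.Icc 1 n,
          ∏ j ∈ Finset.Ioc i (n + 1),
              (((i : ℚ) + (j : ℚ) + 1) / ((i : ℚ) + (j : ℚ) - 1)) =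
          (∏ j ∈ Finset.Ioc i n,
              (((i : ℚ) + (j : ℚ) + 1) / ((i : ℚ) + (j : ℚ) - 1))) *
            (((i : ℚ) + (n : ℚ) + 2) / ((i : ℚ) + (n : ℚ))) := by
        intro i hi
        rw [Finset.mem_Icc] at hi
        rw [Finset.prod_Ioc_succ_top (by omega)]
        push_cast
        congr 1
        congr 1 <;> ring
      rw [Finset.prod_congr rfl hsplit, Finset.prod_mul_distrib, ih, aux_prod n]
      have hcb := Nat.succ_mul_centralBinom_succ n
      have hcb' : ((n : ℚ) + 1) * ((2 * (n + 1)).choose (n + 1) : ℚ) =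
          2 * (2 * (n : ℚ) + 1) * (((2 * n).choose n : ℚ)) := by
        have := congrArg (fun k : ℕ => (k : ℚ)) hcb
        simp only [Nat.centralBinom] at this
        push_cast at this ⊢
        linarith
      have h1 : ((n : ℚ) + 1) ≠ 0 := by positivity
      have h2 : ((n : ℚ) + 2) ≠ 0 := by positivity
      have h3 : ((n : ℚ) + 1 + 1) ≠ 0 := by positivity
      push_cast at hcb' ⊢
      field_simp
      linear_combination (-1 : ℚ) * ((n : ℚ) + 1) * ((n : ℚ) + 2) * hcb'
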